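/- Let R = i_1 i_2 ⋯ i_N be a reduced word for the longest element w_0 ∈ S_n, where N = n(n−1)/2. Then for every x ∈ S_n, the coefficient D_R(x) of q^{N−1} in wt_R(x) equals the number of positions j ∈ {1,…,N} such that the Demazure product of the word obtained from R by deleting its j-th letter equals x, i.e. D_R(x) = #{ j ∈ {1,…,N} : Dem(i_1 ⋯ i_{j−1} i_{j+1} ⋯ i_N) = x }. -/

import Mathlib

open scoped Classical

namespace BSDist

/-- The simple transposition `s i` (1-indexed): it swaps the values `i` and `i+1`
of `{1,…,n}`, i.e. the elements `i-1` and `i` of `Fin n`.  Out-of-range letters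
give the identity. -/
def sTr (n : ℕ) (i : ℕ) : Equiv.Perm (Fin n) :=
  if h : 1 ≤ i ∧ i < n then Equiv.swap ⟨i - 1, by omega⟩ ⟨i, h.2⟩ else 1

/-- The product `w(R) = s_{i₁} ⋯ s_{i_L}` of a word. -/
def wprod (n : ℕ) (R : List ℕ) : Equiv.Perm (Fin n) := (R.map (sTr n)).prod

/-- The Coxeter length of a permutation: its number of inversions. -/
def len {n : ℕ} (w : Equiv.Perm (Fin n)) : ℕ :=
  (Finset.univ.filter (fun p : Fin n × Fin n => p.1 < p.2 ∧ w p.2 < w p.1)).card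

/-- A word over the alphabet `{1,…,n-1}`. -/
def Alphabet (n : ℕ) (R : List ℕ) : Prop := ∀ i ∈ R, 1 ≤ i ∧ i < n

/-- `R` is a reduced word (over the alphabet `{1,…,n-1}`). -/
def IsReducedWord (n : ℕ) (R : List ℕ) : Prop :=
  Alphabet n R ∧ R.length = len (wprod n R)

/-- `R` is a reduced word for `w`. -/
def IsReducedWordFor (n : ℕ) (R : List ℕ) (w : Equiv.Perm (Fin n)) : Prop :=
  IsReducedWord n R ∧ wprod n R = w

/-- The weight `wt_R : S_n → ℤ[q]`, defined by the recursion
`wt_∅(e) = 1`, `wt_∅(x) = 0` for `x ≠ e`, and for an appended letter `i`: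
`wt_{Ri}(x) = wt_R(x) + wt_R(x sᵢ)` if `ℓ(x sᵢ) > ℓ(x)`, and
`wt_{Ri}(x) = q·wt_R(x) + q·wt_R(x sᵢ)` if `ℓ(x sᵢ) < ℓ(x)`. -/
noncomputable def wt (n : ℕ) (R : List ℕ) : Equiv.Perm (Fin n) → Polynomial ℤ :=
  R.foldl
    (fun f i x =>
      if len x < len (x * sTr n i) then f x + f (x * sTr n i)
      else Polynomial.X * f x + Polynomial.X * f (x * sTr n i))
    (fun x => if x = 1 then 1 else 0)

/-- A single commutation move: replace a consecutive factor `ij` by `ji` where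
`|i - j| > 1`. -/
def CommMove (R R' : List ℕ) : Prop :=
  ∃ (A B : List ℕ) (i j : ℕ), (i + 1 < j ∨ j + 1 < i) ∧
    R = A ++ [i, j] ++ B ∧ R' = A ++ [j, i] ++ B

/-- Commutation equivalence: a finite sequence of commutation moves. -/
def CommEquiv (R R' : List ℕ) : Prop := Relation.ReflTransGen CommMove R R'

/-- A single braid move: replace a consecutive factor `k(k+1)k` by `(k+1)k(k+1)`. -/
def BraidMove (R R' : List ℕ) : Prop :=
  ∃ (A B : List ℕ) (k : ℕ),
    R = A ++ [k, k + 1, k] ++ B ∧ R' = A ++ [k + 1, k, k + 1] ++ B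

/-- The Demazure product of a word, computed left to right:
`w ∗ sᵢ = w sᵢ` if `ℓ(w sᵢ) > ℓ(w)`, and `w ∗ sᵢ = w` otherwise. -/
def dem (n : ℕ) (R : List ℕ) : Equiv.Perm (Fin n) :=
  R.foldl (fun w i => if len w < len (w * sTr n i) then w * sTr n i else w) 1

/-- `app w t` is the value `w(t)` in 1-indexed one-line notation:
positions and values both run through `{1,…,n}`. -/
def app {n : ℕ} (w : Equiv.Perm (Fin n)) (t : ℕ) : ℕ :=
  if h : 1 ≤ t ∧ t ≤ n then ((w ⟨t - 1, by omega⟩ : Fin n) : ℕ) + 1 else 0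

/-- `posOf x t = x⁻¹(t)`, the (1-indexed) position of the value `t` in `x`. -/
def posOf {n : ℕ} (x : Equiv.Perm (Fin n)) (t : ℕ) : ℕ := app x⁻¹ t

/-- The longest element `w₀` of `S_n` (the order-reversing permutation). -/
def w0 (n : ℕ) : Equiv.Perm (Fin n) := ⟨Fin.rev, Fin.rev, Fin.rev_rev, Fin.rev_rev⟩

/-- The value pair `(a,b)` (with `a < b`) is an inversion of `x`:
`x⁻¹(a) > x⁻¹(b)`. -/
def IsInversion {n : ℕ} (x : Equiv.Perm (Fin n)) (a b : ℕ) : Prop :=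
  posOf x b < posOf x a

/-- `tau R a b` is the first time `k` at which the pair `(a,b)` is an inversion
of the prefix product `s_{i₁} ⋯ s_{i_k}`. -/
noncomputable def tau (n : ℕ) (R : List ℕ) (a b : ℕ) : ℕ :=
  sInf {k | IsInversion (wprod n (R.take k)) a b}

/-- `T_R(a,b,c) = +1` if `τ_R(a,b) < τ_R(b,c)` and `-1` otherwise. -/
noncomputable def T (n : ℕ) (R : List ℕ) (a b c : ℕ) : ℤ :=
  if tau n R a b < tau n R b c then 1 else -1

/-- `Supp(x) = {t : pos_x(t) ≠ pos_{w₀}(t)}`. -/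
noncomputable def Supp (n : ℕ) (x : Equiv.Perm (Fin n)) : Finset ℕ :=
  (Finset.Icc 1 n).filter (fun t => posOf x t ≠ posOf (w0 n) t)

/-- `Fwd(x) = {t : pos_x(t) < pos_{w₀}(t)}`. -/
noncomputable def Fwd (n : ℕ) (x : Equiv.Perm (Fin n)) : Finset ℕ :=
  (Finset.Icc 1 n).filter (fun t => posOf x t < posOf (w0 n) t)

/-- `Bwd(x) = {t : pos_x(t) > pos_{w₀}(t)}`. -/
noncomputable def Bwd (n : ℕ) (x : Equiv.Perm (Fin n)) : Finset ℕ :=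
  (Finset.Icc 1 n).filter (fun t => posOf (w0 n) t < posOf x t)

/-- `D_R(x)`: the coefficient of `q^{N-1}` in `wt_R(x)`, where `N = n(n-1)/2`. -/
noncomputable def D (n : ℕ) (R : List ℕ) (x : Equiv.Perm (Fin n)) : ℤ :=
  (wt n R x).coeff (n * (n - 1) / 2 - 1)

/-- `σ_b(x) = sign(pos_x(b) − pos_{w₀}(b)) ∈ {−1,0,+1}`. -/
noncomputable def sigmaVal (n : ℕ) (b : ℕ) (x : Equiv.Perm (Fin n)) : ℤ :=
  Int.sign ((posOf x b : ℤ) - (posOf (w0 n) b : ℤ))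

/-- `Θ_R(a,b,c) = Σ_{x : Supp(x) = [a,c]} D_R(x)·σ_b(x)`. -/
noncomputable def Theta (n : ℕ) (R : List ℕ) (a b c : ℕ) : ℤ :=
  ∑ x ∈ Finset.univ.filter (fun x : Equiv.Perm (Fin n) => Supp n x = Finset.Icc a c),
    D n R x * sigmaVal n b x

end BSDist

namespace BSDist

variable {n : ℕ}

lemma len_one : len (1 : Equiv.Perm (Fin n)) = 0 := by
  rw [len, Finset.card_eq_zero, Finset.filter_eq_empty_iff]
  rintro ⟨p, q⟩ _ ⟨h1, h2⟩
  simp only [Equiv.Perm.coe_one, id_eq] at h2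
  exact absurd (h1.trans h2) (lt_irrefl _)

lemma sTr_eq (i : ℕ) (h1 : 1 ≤ i) (h2 : i < n) :
    sTr n i = Equiv.swap ⟨i - 1, by omega⟩ ⟨i, h2⟩ := by
  simp [sTr, h1, h2]

lemma sTr_mul_self (i : ℕ) : sTr n i * sTr n i = 1 := by
  unfold sTr; split <;> simp

lemma mul_sTr_cancel (x : Equiv.Perm (Fin n)) (i : ℕ) : x * sTr n i * sTr n i = x := by
  rw [mul_assoc, sTr_mul_self, mul_one]

lemma wprod_nil : wprod n [] = 1 := rfl

lemma wprod_concat (R : List ℕ) (i : ℕ) :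
    wprod n (R ++ [i]) = wprod n R * sTr n i := by
  simp [wprod]

lemma wt_concat (R : List ℕ) (i : ℕ) (x : Equiv.Perm (Fin n)) :
    wt n (R ++ [i]) x =
      if len x < len (x * sTr n i) then wt n R x + wt n R (x * sTr n i)
      else Polynomial.X * wt n R x + Polynomial.X * wt n R (x * sTr n i) := by
  simp [wt, List.foldl_append]

lemma dem_concat (R : List ℕ) (i : ℕ) :
    dem n (R ++ [i]) =
      if len (dem n R) < len (dem n R * sTr n i) then dem n R * sTr n i else dem n R := by
  simp [dem, List.foldl_append]
  exact if_congr Iff.rfl rfl rfl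

lemma len_mul_sTr (w : Equiv.Perm (Fin n)) (i : ℕ) (h1 : 1 ≤ i) (h2 : i < n) :
    len (w * sTr n i) = len w + 1 ∨ len w = len (w * sTr n i) + 1 := by
  set a : Fin n := ⟨i - 1, by omega⟩ with ha
  set b : Fin n := ⟨i, h2⟩ with hb
  have hvab : (a : ℕ) + 1 = (b : ℕ) := by simp [ha, hb]; omega
  have hab : a < b := by rw [Fin.lt_def]; omega
  set s := Equiv.swap a b with hs
  have hsTr : sTr n i = s := sTr_eq i h1 h2
  have key : ∀ p q : Fin n, p < q → ¬(p = a ∧ q = b) → s p < s q := by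
    intro p q hpq hne
    have hlt := Fin.lt_def.mp hpq
    have hav : (a : ℕ) = i - 1 := rfl
    have hbv : (b : ℕ) = i := rfl
    rcases eq_or_ne p a with rfl | hpa
    · have hqb : q ≠ b := fun h => hne ⟨rfl, h⟩
      have hqa : q ≠ a := (ne_of_gt hpq)
      rw [Equiv.swap_apply_left, Equiv.swap_apply_of_ne_of_ne hqa hqb]
      rw [Fin.lt_def]
      have h1 : (q : ℕ) ≠ i := fun h => hqb (Fin.ext (by omega))
      omega
    · rcases eq_or_ne p b with rfl | hpb
      · have hqa : q ≠ a := ne_of_gt (hab.trans hpq)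
        have hqb : q ≠ b := ne_of_gt hpq
        rw [Equiv.swap_apply_right, Equiv.swap_apply_of_ne_of_ne hqa hqb]
        exact hab.trans hpq
      · rw [Equiv.swap_apply_of_ne_of_ne hpa hpb]
        rcases eq_or_ne q a with rfl | hqa
        · rw [Equiv.swap_apply_left, Fin.lt_def]
          omega
        · rcases eq_or_ne q b with rfl | hqb
          · rw [Equiv.swap_apply_right, Fin.lt_def]
            have h1 : (p : ℕ) ≠ i - 1 := fun h => hpa (Fin.ext (by omega))
            omega
          · rw [Equiv.swap_apply_of_ne_of_ne hqa hqb]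
            exact hpq
  have happ : ∀ x : Fin n, (w * sTr n i) x = w (s x) := by
    intro x; rw [hsTr]; rfl
  set A := Finset.univ.filter
      (fun pq : Fin n × Fin n => pq.1 < pq.2 ∧ (w * sTr n i) pq.2 < (w * sTr n i) pq.1) with hA
  set B := Finset.univ.filter
      (fun pq : Fin n × Fin n => pq.1 < pq.2 ∧ w pq.2 < w pq.1) with hB
  have hlenws : len (w * sTr n i) = A.card := rfl
  have hlenw : len w = B.card := rfl
  have hss : ∀ x : Fin n, s (s x) = x := fun x => Equiv.swap_apply_self a b x
  have hcard : (A.erase (a, b)).card = (B.erase (a, b)).card := by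
    apply Finset.card_nbij' (i := fun pq => (s pq.1, s pq.2)) (j := fun pq => (s pq.1, s pq.2))
    · intro pq hpq
      obtain ⟨hne, hmem⟩ := Finset.mem_erase.mp hpq
      obtain ⟨-, h1, h2⟩ := Finset.mem_filter.mp hmem
      refine Finset.mem_erase.mpr ⟨?_, Finset.mem_filter.mpr ⟨Finset.mem_univ _, ?_, ?_⟩⟩
      · intro h
        obtain ⟨h3, h4⟩ := Prod.mk.injEq .. ▸ h
        have : pq.1 = s a := by rw [← h3, hss]
        have h5 : pq.1 = b := by rw [this, Equiv.swap_apply_left]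
        have : pq.2 = s b := by rw [← h4, hss]
        have h6 : pq.2 = a := by rw [this, Equiv.swap_apply_right]
        rw [h5, h6] at h1
        exact absurd (h1.trans hab) (lt_irrefl _)
      · exact key _ _ h1 (fun hh => hne (Prod.ext hh.1 hh.2))
      · rw [happ, happ] at h2; exact h2
    · intro pq hpq
      obtain ⟨hne, hmem⟩ := Finset.mem_erase.mp hpq
      obtain ⟨-, h1, h2⟩ := Finset.mem_filter.mp hmem
      refine Finset.mem_erase.mpr ⟨?_, Finset.mem_filter.mpr ⟨Finset.mem_univ _, ?_, ?_⟩⟩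
      · intro h
        obtain ⟨h3, h4⟩ := Prod.mk.injEq .. ▸ h
        have h5 : pq.1 = b := by rw [← hss pq.1, h3, Equiv.swap_apply_left]
        have h6 : pq.2 = a := by rw [← hss pq.2, h4, Equiv.swap_apply_right]
        rw [h5, h6] at h1
        exact absurd (h1.trans hab) (lt_irrefl _)
      · exact key _ _ h1 (fun hh => hne (Prod.ext hh.1 hh.2))
      · rw [happ, happ, hss, hss]; exact h2
    · intro pq _; simp [hss]
    · intro pq _; simp [hss]
  have hsb : s b = a := Equiv.swap_apply_right a b
  have hsa : s a = b := Equiv.swap_apply_left a b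
  have hAmem : (a, b) ∈ A ↔ w a < w b := by
    rw [hA, Finset.mem_filter]
    constructor
    · rintro ⟨-, -, h⟩; rw [happ, happ, hsa, hsb] at h; exact h
    · intro h
      refine ⟨Finset.mem_univ _, hab, ?_⟩
      rw [happ, happ, hsa, hsb]; exact h
  have hBmem : (a, b) ∈ B ↔ w b < w a := by
    rw [hB, Finset.mem_filter]
    constructor
    · rintro ⟨-, -, h⟩; exact h
    · intro h; exact ⟨Finset.mem_univ _, hab, h⟩
  have hwab : w a ≠ w b := fun h => (ne_of_lt hab) (w.injective h)
  rcases lt_or_gt_of_ne hwab with hlt | hgt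
  · left
    have h1 : (a, b) ∈ A := hAmem.mpr hlt
    have h2 : (a, b) ∉ B := fun h => absurd (hBmem.mp h) (not_lt_of_gt hlt)
    rw [hlenws, hlenw, ← Finset.card_erase_add_one h1, hcard,
      Finset.erase_eq_of_notMem h2]
  · right
    have h1 : (a, b) ∉ A := fun h => absurd (hAmem.mp h) (not_lt_of_gt hgt)
    have h2 : (a, b) ∈ B := hBmem.mpr hgt
    rw [hlenws, hlenw, ← Finset.card_erase_add_one h2, hcard.symm,
      Finset.erase_eq_of_notMem h1]

lemma len_succ_of_not_lt {w : Equiv.Perm (Fin n)} {i : ℕ} (h1 : 1 ≤ i) (h2 : i < n)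
    (h : ¬ len w < len (w * sTr n i)) : len w = len (w * sTr n i) + 1 := by
  rcases len_mul_sTr w i h1 h2 with h' | h' <;> omega

lemma len_wprod_le (R : List ℕ) (hA : Alphabet n R) : len (wprod n R) ≤ R.length := by
  induction R using List.reverseRecOn with
  | nil => simp [wprod_nil, len_one]
  | append_singleton R i ih =>
    have hi : 1 ≤ i ∧ i < n := hA i (by simp)
    have hR : Alphabet n R := fun j hj => hA j (by simp [hj])
    rw [wprod_concat]
    rcases len_mul_sTr (wprod n R) i hi.1 hi.2 with h | h <;>
      · have := ih hR; simp only [List.length_append, List.length_singleton]; omega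

lemma reduced_peel {R : List ℕ} {i : ℕ} (h : IsReducedWord n (R ++ [i])) :
    IsReducedWord n R ∧ len (wprod n R * sTr n i) = len (wprod n R) + 1 ∧ 1 ≤ i ∧ i < n := by
  obtain ⟨hA, hlen⟩ := h
  have hi : 1 ≤ i ∧ i < n := hA i (by simp)
  have hRA : Alphabet n R := fun j hj => hA j (by simp [hj])
  have h1 : len (wprod n R) ≤ R.length := len_wprod_le R hRA
  rw [wprod_concat] at hlen
  simp only [List.length_append, List.length_singleton] at hlen
  rcases len_mul_sTr (wprod n R) i hi.1 hi.2 with h2 | h2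
  · have h3 : R.length = len (wprod n R) := by omega
    exact ⟨⟨hRA, h3⟩, by omega, hi⟩
  · omega

lemma dem_nil : dem n [] = 1 := rfl

lemma dem_reduced (R : List ℕ) (h : IsReducedWord n R) : dem n R = wprod n R := by
  induction R using List.reverseRecOn with
  | nil => rfl
  | append_singleton R i ih =>
    obtain ⟨hR, hasc, hi1, hi2⟩ := reduced_peel h
    rw [dem_concat, wprod_concat, ih hR, if_pos (by omega)]

lemma wt_coeff_eq_zero (R : List ℕ) (x : Equiv.Perm (Fin n)) (k : ℕ) (hk : R.length < k) :
    (wt n R x).coeff k = 0 := by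
  induction R using List.reverseRecOn generalizing x k with
  | nil =>
    have hk0 : k ≠ 0 := by simp at hk; omega
    show ((if x = 1 then (1 : Polynomial ℤ) else 0)).coeff k = 0
    split <;> simp [Polynomial.coeff_one, hk0]
  | append_singleton R i ih =>
    rw [wt_concat]
    simp only [List.length_append, List.length_singleton] at hk
    obtain ⟨m, rfl⟩ : ∃ m, k = m + 1 := ⟨k - 1, by omega⟩
    split
    · rw [Polynomial.coeff_add, ih x _ (by omega), ih _ _ (by omega), add_zero]
    · rw [Polynomial.coeff_add, Polynomial.coeff_X_mul, Polynomial.coeff_X_mul,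
        ih x _ (by omega), ih _ _ (by omega), add_zero]

lemma coeff_top (R : List ℕ) (h : IsReducedWord n R) (x : Equiv.Perm (Fin n)) :
    (wt n R x).coeff R.length = if x = wprod n R then 1 else 0 := by
  induction R using List.reverseRecOn generalizing x with
  | nil =>
    show ((if x = 1 then (1 : Polynomial ℤ) else 0)).coeff 0 = if x = wprod n [] then 1 else 0
    rw [wprod_nil]
    split <;> simp
  | append_singleton R i ih =>
    obtain ⟨hR, hasc, hi1, hi2⟩ := reduced_peel h
    rw [wt_concat, wprod_concat]
    simp only [List.length_append, List.length_singleton]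
    split
    · rename_i hx
      rw [Polynomial.coeff_add, wt_coeff_eq_zero R x _ (by omega),
        wt_coeff_eq_zero R _ _ (by omega), add_zero, if_neg]
      intro hxe
      subst hxe
      rw [mul_sTr_cancel] at hx
      omega
    · rename_i hx
      have hd := len_succ_of_not_lt hi1 hi2 hx
      rw [Polynomial.coeff_add, Polynomial.coeff_X_mul, Polynomial.coeff_X_mul,
        ih hR x, ih hR (x * sTr n i)]
      by_cases h1 : x = wprod n R
      · exfalso
        subst h1
        omega
      · rw [if_neg h1]
        by_cases h2 : x * sTr n i = wprod n R
        · rw [if_pos h2, if_pos (by rw [← h2, mul_sTr_cancel]), zero_add]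
        · rw [if_neg h2, if_neg (fun hh => h2 (by rw [hh, mul_sTr_cancel])), add_zero]

lemma coeff_subtop (R : List ℕ) (h : IsReducedWord n R) (hne : R ≠ []) (x : Equiv.Perm (Fin n)) :
    (wt n R x).coeff (R.length - 1)
      = (((Finset.range R.length).filter (fun j => dem n (R.eraseIdx j) = x)).card : ℤ) := by
  induction R using List.reverseRecOn generalizing x with
  | nil => exact absurd rfl hne
  | append_singleton R i ih =>
    obtain ⟨hR, hasc, hi1, hi2⟩ := reduced_peel h
    have hL : (R ++ [i]).length = R.length + 1 := by simp
    have hsplit : ∀ y : Equiv.Perm (Fin n),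
        ((Finset.range (R.length + 1)).filter
            (fun j => dem n ((R ++ [i]).eraseIdx j) = y)).card
          = ((Finset.range R.length).filter
              (fun j => dem n (R.eraseIdx j ++ [i]) = y)).card
            + (if dem n R = y then 1 else 0) := by
      intro y
      have he1 : (R ++ [i]).eraseIdx R.length = R := by
        rw [List.eraseIdx_append_of_length_le (le_refl _)]
        simp
      have hcong : (Finset.range R.length).filter
            (fun j => dem n ((R ++ [i]).eraseIdx j) = y)
          = (Finset.range R.length).filter (fun j => dem n (R.eraseIdx j ++ [i]) = y) := by
        apply Finset.filter_congr
        intro j hj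
        rw [List.eraseIdx_append_of_lt_length (Finset.mem_range.mp hj)]
      rw [Finset.range_add_one, Finset.filter_insert, he1]
      by_cases hdy : dem n R = y
      · rw [if_pos hdy, Finset.card_insert_of_notMem
          (fun hmem => by simpa using (Finset.mem_filter.mp hmem).1), hcong, if_pos hdy]
      · rw [if_neg hdy, hcong, if_neg hdy, add_zero]
    rw [wt_concat, hL, Nat.add_sub_cancel, hsplit x]
    split
    · rename_i hx
      rw [Polynomial.coeff_add, coeff_top R hR x, coeff_top R hR (x * sTr n i),
        dem_reduced R hR]
      have h2 : x * sTr n i ≠ wprod n R := by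
        intro hh
        have hx2 : x = wprod n R * sTr n i := by rw [← hh, mul_sTr_cancel]
        have h3 : len x = len (wprod n R) + 1 := by rw [hx2, hasc]
        have h4 : len (x * sTr n i) = len (wprod n R) := by rw [hh]
        omega
      have hempty : (Finset.range R.length).filter
          (fun j => dem n (R.eraseIdx j ++ [i]) = x) = ∅ := by
        rw [Finset.filter_eq_empty_iff]
        intro j _
        rw [dem_concat]
        split
        · rename_i hy
          intro hcontra
          have hy1 : len (dem n (R.eraseIdx j) * sTr n i) = len (dem n (R.eraseIdx j)) + 1 := by
            rcases len_mul_sTr (dem n (R.eraseIdx j)) i hi1 hi2 with hh | hh <;> omega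
          have hxs : x * sTr n i = dem n (R.eraseIdx j) := by rw [← hcontra, mul_sTr_cancel]
          have e1 : len x = len (dem n (R.eraseIdx j)) + 1 := by rw [← hcontra]; exact hy1
          have e2 : len (x * sTr n i) = len (dem n (R.eraseIdx j)) := by rw [hxs]
          omega
        · rename_i hy
          intro hcontra
          have := len_succ_of_not_lt hi1 hi2 hy
          rw [hcontra] at this
          omega
      rw [hempty, if_neg h2, add_zero]
      by_cases h1 : x = wprod n R
      · rw [if_pos h1, if_pos h1.symm]
        simp
      · rw [if_neg h1, if_neg (fun hh => h1 hh.symm)]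
        simp
    · rename_i hx
      have hd := len_succ_of_not_lt hi1 hi2 hx
      rcases eq_or_ne R [] with rfl | hRne
      · have hx1 : x ≠ 1 := by
          intro hh
          rw [hh, len_one] at hd
          omega
        have hx1' : dem n ([] : List ℕ) ≠ x := by
          rw [dem_nil]; exact fun hh => hx1 hh.symm
        simp only [List.length_nil, Finset.range_zero, Finset.filter_empty,
          Finset.card_empty, zero_add, if_neg hx1', Polynomial.coeff_add]
        rw [Polynomial.mul_coeff_zero, Polynomial.mul_coeff_zero, Polynomial.coeff_X_zero]
        simp
      · obtain ⟨m, hm⟩ : ∃ m, R.length = m + 1 :=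
          ⟨R.length - 1, by cases R with | nil => exact absurd rfl hRne | cons a l => simp⟩
        have ihx := ih hR hRne x
        have ihs := ih hR hRne (x * sTr n i)
        rw [hm, Nat.add_sub_cancel] at ihx ihs
        rw [Polynomial.coeff_add, hm, Polynomial.coeff_X_mul, Polynomial.coeff_X_mul, ← hm,
          hm, ihx, ihs, ← hm]
        have hwx : dem n R ≠ x := by
          rw [dem_reduced R hR]
          intro hh
          rw [hh] at hasc
          omega
        have hiff : ∀ j ∈ Finset.range R.length,
            dem n (R.eraseIdx j ++ [i]) = x ↔
              (dem n (R.eraseIdx j) = x ∨ dem n (R.eraseIdx j) = x * sTr n i) := by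
          intro j _
          rw [dem_concat]
          split
          · rename_i hy
            have hy1 : len (dem n (R.eraseIdx j) * sTr n i)
                = len (dem n (R.eraseIdx j)) + 1 := by
              rcases len_mul_sTr (dem n (R.eraseIdx j)) i hi1 hi2 with hh | hh <;> omega
            constructor
            · intro hh
              right
              rw [← hh, mul_sTr_cancel]
            · rintro (hh | hh)
              · exfalso
                rw [hh] at hy
                omega
              · rw [hh, mul_sTr_cancel]
          · rename_i hy
            have hy1 := len_succ_of_not_lt hi1 hi2 hy
            constructor
            · intro hh
              exact Or.inl hh
            · rintro (hh | hh)
              · exact hh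
              · exfalso
                rw [hh, mul_sTr_cancel] at hy1
                omega
        rw [Finset.filter_congr hiff, Finset.filter_or,
          Finset.card_union_of_disjoint, if_neg hwx]
        · push_cast
          ring
        · rw [Finset.disjoint_left]
          intro j hj1 hj2
          have h1 := (Finset.mem_filter.mp hj1).2
          have h2 := (Finset.mem_filter.mp hj2).2
          rw [h1] at h2
          rw [← h2] at hd
          omega

lemma len_w0 : len (w0 n) = n * (n - 1) / 2 := by
  have happ : ∀ x : Fin n, (w0 n) x = Fin.rev x := fun _ => rfl
  have hfe : (Finset.univ.filter
        (fun p : Fin n × Fin n => p.1 < p.2 ∧ (w0 n) p.2 < (w0 n) p.1))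
      = Finset.univ.filter (fun p : Fin n × Fin n => p.1 < p.2) := by
    apply Finset.filter_congr
    intro p _
    rw [happ, happ, Fin.rev_lt_rev]
    exact ⟨fun hh => hh.1, fun hh => ⟨hh, hh⟩⟩
  rw [len, hfe]
  rw [Finset.card_filter, Fintype.sum_prod_type]
  have h1 : ∀ p : Fin n, (∑ q : Fin n, if p < q then (1:ℕ) else 0)
      = (Finset.Ioi p).card := by
    intro p
    rw [← Finset.filter_lt_eq_Ioi, Finset.card_filter]
  calc (∑ p : Fin n, ∑ q : Fin n, if p < q then (1:ℕ) else 0)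
      = ∑ p : Fin n, (n - 1 - (p:ℕ)) := by
        refine Finset.sum_congr rfl fun p _ => ?_
        rw [h1, Fin.card_Ioi]
    _ = ∑ k ∈ Finset.range n, (n - 1 - k) := Fin.sum_univ_eq_sum_range _ n
    _ = ∑ k ∈ Finset.range n, k := Finset.sum_range_reflect (fun j => j) n
    _ = n * (n - 1) / 2 := by
        have := Finset.sum_range_id_mul_two n
        omega

lemma count_Icc_eq_range (N : ℕ) (p : ℕ → Prop) [DecidablePred p]
    [DecidablePred fun j => p (j - 1)] :
    ((Finset.Icc 1 N).filter fun j => p (j - 1)).card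
      = ((Finset.range N).filter p).card := by
  apply Finset.card_nbij' (i := fun j => j - 1) (j := fun j => j + 1)
  · intro j hj
    obtain ⟨hj1, hj2⟩ := Finset.mem_filter.mp hj
    rw [Finset.mem_Icc] at hj1
    exact Finset.mem_filter.mpr ⟨Finset.mem_range.mpr (by beta_reduce; omega), hj2⟩
  · intro j hj
    obtain ⟨hj1, hj2⟩ := Finset.mem_filter.mp hj
    rw [Finset.mem_range] at hj1
    refine Finset.mem_filter.mpr ⟨Finset.mem_Icc.mpr (by beta_reduce; omega), ?_⟩
    simpa using hj2
  · intro j hj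
    obtain ⟨hj1, _⟩ := Finset.mem_filter.mp hj
    rw [Finset.mem_Icc] at hj1
    beta_reduce; omega
  · intro j _
    beta_reduce; omega

/-- Let `R` be a reduced word for `w₀ ∈ S_n`, with
`N = n(n−1)/2`.  For every `x ∈ S_n`, the coefficient of `q^{N−1}` in
`wt_R(x)` equals the number of positions `j ∈ {1,…,N}` such that the Demazure
product of `R` with its `j`-th letter deleted equals `x`. -/
theorem coeff_wt_eq_card_demazure_shortenings
    (n : ℕ) (hn : 2 ≤ n) (R : List ℕ)
    (hred : IsReducedWordFor n R (w0 n))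
    (N : ℕ) (hN : N = n * (n - 1) / 2)
    (x : Equiv.Perm (Fin n)) :
    (wt n R x).coeff (N - 1)
      = (((Finset.Icc 1 N).filter
            (fun j => dem n (R.eraseIdx (j - 1)) = x)).card : ℤ) := by
  obtain ⟨hRW, hw⟩ := hred
  have hlen : R.length = N := by rw [hRW.2, hw, len_w0, hN]
  have hN1 : 1 ≤ N := by
    have h2 : 2 ≤ n * (n - 1) := by
      calc 2 = 2 * 1 := by norm_num
        _ ≤ n * (n - 1) := Nat.mul_le_mul hn (by omega)
    omega
  have hne : R ≠ [] := by
    intro h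
    rw [h] at hlen
    simp at hlen
    omega
  have hmain := coeff_subtop R hRW hne x
  rw [hlen] at hmain
  rw [hmain]
  norm_cast
  exact (count_Icc_eq_range N (fun j => dem n (R.eraseIdx j) = x)).symm


end BSDist
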